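/- Let G = (V,E) be a finite simple graph with |V| = N, let A^1,…,A^{N−1} ⊆ V, let W be the closure of {A^1,…,A^{N−1}} under symmetric difference (the 𝔽₂-span, containing ∅), and suppose (AC, P, R) is Bell data satisfying Requirements 1 and 2 in which every occurring sign sequence is s^A for some independent set A ∈ W. Put S^j = ∏_{v∈A^j} G_v, Q = ∏_{j=1}^{N−1} (I + S^j)/2, and ρ = Q / Tr(Q). Then with the ideal observables (A_i = (X_i+Z_i)/√2, B_i = (X_i−Z_i)/√2 for i ∈ AC and A_i = X_i, B_i = Z_i otherwise), the Bell operator B = Σ_{(s,t)∈P}(B_s + B_t) + Σ_{u∈R} B_u with B_s = ∏_{i∈AC, s_i≠0}(A_i + s_i B_i)·∏_{i∉AC} O_i(s_i) satisfies Tr(ρ B) = 2√2·|P| + |R|; that is, the mixed state ρ also attains the maximal quantum value of the Bell inequality constructed from these stabilizers. -/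

import Mathlib

/-!
STATEMENT 14: the mixed state `ρ = Q / Tr Q`, with `Q = ∏_{j<N-1} (I + S^j)/2`
built from `N−1` stabilizers, also attains the maximal quantum value
`2√2|P| + |R|` of a Bell operator constructed from stabilizer sign sequences
lying in the 𝔽₂-span of the defining family.
-/

open scoped InnerProductSpace

noncomputable section

variable {V : Type} [Fintype V] [DecidableEq V]

/-- The Hilbert space of `|V|` qubits, `ℂ^({0,1}^V)`. -/
abbrev QState (V : Type) [Fintype V] [DecidableEq V] :=
  EuclideanSpace ℂ (V → Bool)

/-- The Pauli `Z` operator on qubit `v`. -/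
def pauliZ (v : V) : QState V →ₗ[ℂ] QState V where
  toFun ψ := WithLp.toLp 2 (fun x => (if x v then -1 else 1) * ψ x)
  map_add' ψ φ := by
    ext x
    simp [mul_add]
  map_smul' c ψ := by
    ext x
    simp [mul_comm, mul_left_comm]

/-- The Pauli `X` operator on qubit `v`. -/
def pauliX (v : V) : QState V →ₗ[ℂ] QState V where
  toFun ψ := WithLp.toLp 2 (fun x => ψ (Function.update x v (!x v)))
  map_add' ψ φ := by ext x; simp
  map_smul' c ψ := by ext x; simp

/-- The stabilizer generator `G_v = X_v ∏_{u ∈ n_v} Z_u` of the graph state. -/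
def stabGen (G : SimpleGraph V) [DecidableRel G.Adj] (v : V) :
    QState V →ₗ[ℂ] QState V :=
  pauliX v * ((G.neighborFinset v).toList.map pauliZ).prod

/-- The stabilizer sign sequence `s^A` of an independent set `A`. -/
def signSeq (G : SimpleGraph V) [DecidableRel G.Adj] (A : Finset V) (v : V) : ℤ :=
  if v ∈ A then 1 else if Odd (G.neighborFinset v ∩ A).card then -1 else 0

/-- Observable associated to the symbol `k`. -/
def obsV (Ao Bo : V → QState V →ₗ[ℂ] QState V) (i : V) (k : ℤ) :
    QState V →ₗ[ℂ] QState V :=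
  if k = 1 then Ao i else if k = -1 then Bo i else 1

/-- The Bell operator term
`B_s = ∏_{i∈AC, s_i≠0} (A_i + s_i B_i) · ∏_{i∉AC} O_i(s_i)`. -/
def bellTermV (Ao Bo : V → QState V →ₗ[ℂ] QState V) (AC : Finset V)
    (s : V → ℤ) : QState V →ₗ[ℂ] QState V :=
  ((Finset.univ.filter fun i : V => i ∈ AC ∧ s i ≠ 0).toList.map
      (fun i => Ao i + s i • Bo i)).prod *
  ((Finset.univ.filter fun i : V => i ∉ AC).toList.map
      (fun i => obsV Ao Bo i (s i))).prod

/-- The ideal observable `A_i`: `(X_i + Z_i)/√2` for `i ∈ AC`, `X_i` otherwise. -/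
def idealA (AC : Finset V) (i : V) : QState V →ₗ[ℂ] QState V :=
  if i ∈ AC then ((Real.sqrt 2 : ℝ) : ℂ)⁻¹ • (pauliX i + pauliZ i) else pauliX i

/-- The ideal observable `B_i`: `(X_i − Z_i)/√2` for `i ∈ AC`, `Z_i` otherwise. -/
def idealB (AC : Finset V) (i : V) : QState V →ₗ[ℂ] QState V :=
  if i ∈ AC then ((Real.sqrt 2 : ℝ) : ℂ)⁻¹ • (pauliX i - pauliZ i) else pauliZ i

/-- Membership of `A` in the 𝔽₂-span (closure under symmetric difference,
including `∅`) of the family `Afam`, expressed via indicator functions with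
values in `ZMod 2`. -/
def memSpan (Afam : Fin n → Finset V) (A : Finset V) : Prop :=
  ∃ S : Finset (Fin n), ∀ v : V,
    (if v ∈ A then (1 : ZMod 2) else 0) =
      ∑ j ∈ S, (if v ∈ Afam j then (1 : ZMod 2) else 0)

set_option linter.unusedSectionVars false
set_option linter.unreachableTactic false
set_option linter.unusedTactic false
set_option maxHeartbeats 1000000
open scoped symmDiff

section AuxStatement14


/-- pointwise xor -/
def xo (a x : V → Bool) : V → Bool := fun v => xor (a v) (x v)

lemma xo_bot (x : V → Bool) : xo (fun _ => false) x = x := by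
  funext v; simp [xo]

lemma xo_xo (a a' x : V → Bool) : xo a' (xo a x) = xo (xo a a') x := by
  funext v; simp [xo, Bool.xor_comm, Bool.xor_assoc, Bool.xor_left_comm]

lemma xo_self (a : V → Bool) : xo a a = fun _ => false := by
  funext v; simp [xo]

/-- generalized Pauli-string operator: `(M' a c ψ) x = c x · ψ (x ⊕ a)` -/
def M' (a : V → Bool) (c : (V → Bool) → ℂ) : QState V →ₗ[ℂ] QState V where
  toFun ψ := WithLp.toLp 2 (fun x => c x * ψ (xo a x))
  map_add' ψ φ := by ext x; simp [mul_add]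
  map_smul' r ψ := by ext x; simp [mul_comm, mul_left_comm]

lemma M'_apply (a : V → Bool) (c : (V → Bool) → ℂ) (ψ : QState V) (x : V → Bool) :
    M' a c ψ x = c x * ψ (xo a x) := rfl

lemma M'_mul (a a' : V → Bool) (c c' : (V → Bool) → ℂ) :
    M' a c * M' a' c' = M' (xo a a') (fun x => c x * c' (xo a x)) := by
  apply LinearMap.ext; intro ψ; ext x
  simp only [Module.End.mul_apply, M'_apply, mul_assoc]
  rw [xo_xo]

lemma M'_one : (M' (fun _ => false) (fun _ => 1) : QState V →ₗ[ℂ] QState V) = 1 := by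
  apply LinearMap.ext; intro ψ; ext x
  rw [M'_apply, xo_bot]; simp

/-- indicator string of a single vertex -/
def ev (v : V) : V → Bool := fun u => decide (u = v)

/-- sign function of a Z-string -/
def sgn (b x : V → Bool) : ℂ := ∏ v : V, if b v && x v then -1 else 1

/-- Pauli string with X-part `a` and Z-part `b` -/
def MB (a b : V → Bool) : QState V →ₗ[ℂ] QState V := M' a (sgn b)

lemma sgn_bot (x : V → Bool) : sgn (fun _ => false) x = 1 := by
  simp [sgn]

lemma sgn_mul (b b' a x : V → Bool) :
    sgn b x * sgn b' (xo a x) = sgn b' a * sgn (xo b b') x := by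
  simp only [sgn, ← Finset.prod_mul_distrib]
  refine Finset.prod_congr rfl fun v _ => ?_
  cases hb : b v <;> cases hb' : b' v <;> cases ha : a v <;> cases hx : x v <;>
    simp [xo, hb, hb', ha, hx] <;> norm_num

lemma MB_mul (a b a' b' : V → Bool) :
    MB a b * MB a' b' = sgn b' a • MB (xo a a') (xo b b') := by
  rw [MB, MB, M'_mul]
  apply LinearMap.ext; intro ψ; ext x
  have := sgn_mul b b' a x
  simp only [M'_apply, LinearMap.smul_apply, MB]
  show (sgn b x * sgn b' (xo a x)) * ψ _ = (sgn b' a • (sgn (xo b b') x * ψ _))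
  rw [this]; simp [smul_eq_mul, mul_assoc]

lemma MB_one : (MB (fun _ => false) (fun _ => false) : QState V →ₗ[ℂ] QState V) = 1 := by
  rw [MB]
  have : sgn (fun _ => false : V → Bool) = fun _ => 1 := by
    funext x; exact sgn_bot x
  rw [this, M'_one]

lemma pauliZdef (v : V) : (pauliZ v : QState V →ₗ[ℂ] QState V)
    = MB (fun _ => false) (ev v) := by
  apply LinearMap.ext; intro ψ; ext x
  rw [MB, M'_apply, xo_bot]
  show (if x v then (-1:ℂ) else 1) * ψ x = _
  congr 1
  rw [sgn]
  rw [Finset.prod_eq_single v (fun u _ hu => by simp [ev, hu]) (by simp)]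
  simp [ev]

lemma pauliXdef (v : V) : (pauliX v : QState V →ₗ[ℂ] QState V)
    = MB (ev v) (fun _ => false) := by
  apply LinearMap.ext; intro ψ; ext x
  rw [MB, M'_apply, sgn_bot, one_mul]
  show ψ (Function.update x v (!x v)) = ψ (xo (ev v) x)
  refine congrArg ψ.ofLp ?_
  funext u
  by_cases h : u = v
  · subst h; simp [Function.update, xo, ev]
  · simp [Function.update, h, xo, ev]

lemma sgn_ev (b : V → Bool) (v : V) : sgn b (ev v) = if b v then -1 else 1 := by
  rw [sgn, Finset.prod_eq_single v (fun u _ hu => by simp [ev, hu]) (by simp)]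
  simp [ev]

/-- fold of xor over a list -/
lemma foldr_xor_false (l : List V) (h : V → Bool) (hh : ∀ v ∈ l, h v = false) :
    (l.map h).foldr xor false = false := by
  induction l with
  | nil => simp
  | cons a t ih =>
      simp only [List.map_cons, List.foldr_cons]
      rw [hh a (by simp), ih (fun v hv => hh v (List.mem_cons_of_mem _ hv))]
      simp

lemma foldr_xor_local (l : List V) (hl : l.Nodup) (h : V → Bool) (u : V)
    (hu : ∀ w ∈ l, w ≠ u → h w = false) :
    (l.map h).foldr xor false = (decide (u ∈ l) && h u) := by
  induction l with
  | nil => simp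
  | cons a t ih =>
      simp only [List.map_cons, List.foldr_cons]
      rcases List.nodup_cons.1 hl with ⟨ha, ht⟩
      by_cases hau : a = u
      · subst hau
        rw [foldr_xor_false t h (fun v hv => hu v (List.mem_cons_of_mem _ hv)
            (fun e => ha (e ▸ hv)))]
        simp
      · rw [hu a (by simp) hau, ih ht (fun w hw => hu w (List.mem_cons_of_mem _ hw))]
        simp [List.mem_cons, hau, Ne.symm hau]

lemma foldr_xor_parity (l : List V) (h : V → Bool) :
    (l.map h).foldr xor false = decide (Odd (l.countP h)) := by
  induction l with
  | nil => simp
  | cons a t ih =>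
      simp only [List.map_cons, List.foldr_cons, List.countP_cons, ih]
      cases hha : h a
      · simp [hha]
      · simp only [hha, if_pos rfl, Bool.true_xor, Nat.odd_add_one]
        rcases Nat.even_or_odd (t.countP h) with he | ho
        · simp [he, Nat.not_odd_iff_even.2 he]
        · simp [ho, Nat.not_even_iff_odd.2 ho]

/-- key product lemma for lists of local-X Pauli strings -/
lemma prod_MB (l : List V) (hl : l.Nodup) (f g : V → V → Bool)
    (hf : ∀ v ∈ l, ∀ u, u ≠ v → f v u = false)
    (hg : ∀ v ∈ l, ∀ u ∈ l, u ≠ v → g v u = false) :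
    (l.map fun v => MB (f v) (g v)).prod
      = MB (fun u => (l.map (fun v => f v u)).foldr xor false)
           (fun u => (l.map (fun v => g v u)).foldr xor false) := by
  induction l with
  | nil => simpa using MB_one.symm
  | cons a t ih =>
      rcases List.nodup_cons.1 hl with ⟨ha, ht⟩
      simp only [List.map_cons, List.prod_cons]
      rw [ih ht (fun v hv => hf v (List.mem_cons_of_mem _ hv))
            (fun v hv u hu => hg v (List.mem_cons_of_mem _ hv) u (List.mem_cons_of_mem _ hu)),
          MB_mul]
      have hsgn : sgn (fun u => (t.map (fun v => g v u)).foldr xor false) (f a) = 1 := by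
        rw [sgn]
        apply Finset.prod_eq_one
        intro u _
        by_cases hu : u = a
        · subst hu
          rw [foldr_xor_false _ _ (fun w hw => hg w (List.mem_cons_of_mem _ hw) u
              List.mem_cons_self (fun e => ha (e ▸ hw)))]
          simp
        · rw [hf a List.mem_cons_self u hu]
          simp
      rw [hsgn, one_smul]
      congr 1 <;> funext u <;> simp [xo, List.foldr_cons]

/-- neighbourhood indicator -/
def nb (G : SimpleGraph V) [DecidableRel G.Adj] (v : V) : V → Bool :=
  fun u => decide (u ∈ G.neighborFinset v)

lemma stabGen_eq (G : SimpleGraph V) [DecidableRel G.Adj] (v : V) :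
    stabGen G v = MB (ev v) (nb G v) := by
  rw [stabGen]
  have hz : ((G.neighborFinset v).toList.map pauliZ).prod
      = MB (fun _ => false) (nb G v) := by
    have := prod_MB (V := V) (G.neighborFinset v).toList (Finset.nodup_toList _)
      (fun _ _ => false) (fun w => ev w)
      (fun _ _ u _ => rfl)
      (fun w _ u _ hu => by simp only [ev, decide_eq_false_iff_not]; exact hu)
    rw [List.map_congr_left (fun w _ => pauliZdef w), this]
    congr 1
    · funext u
      exact foldr_xor_false _ _ (fun _ _ => rfl)
    · funext u
      rw [foldr_xor_local _ (Finset.nodup_toList _) _ u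
        (fun w _ hw => by simp only [ev, decide_eq_false_iff_not]; exact Ne.symm hw)]
      simp [nb, ev, Finset.mem_toList]
  rw [hz, pauliXdef, MB_mul]
  have : sgn (nb G v) (ev v) = 1 := by
    rw [sgn_ev]
    simp [nb]
  rw [this, one_smul]
  congr 1 <;> funext u <;> simp [xo]

variable (G : SimpleGraph V) [DecidableRel G.Adj]

/-- product of stabilizer generators over a finset -/
def prodG (A : Finset V) : QState V →ₗ[ℂ] QState V :=
  (A.toList.map (stabGen G)).prod

lemma stabGen_comm (v u : V) : Commute (stabGen G v) (stabGen G u) := by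
  unfold Commute SemiconjBy
  rw [stabGen_eq, stabGen_eq, MB_mul, MB_mul]
  have h1 : xo (ev v) (ev u) = xo (ev u) (ev v) := by
    funext w; simp [xo, Bool.xor_comm]
  have h2 : xo (nb G v) (nb G u) = xo (nb G u) (nb G v) := by
    funext w; simp [xo, Bool.xor_comm]
  rw [h1, h2]
  congr 1
  rw [sgn_ev, sgn_ev]
  simp only [nb, SimpleGraph.mem_neighborFinset]
  by_cases h : G.Adj v u
  · simp [h, h.symm]
  · have h' : ¬ G.Adj u v := fun hh => h hh.symm
    simp [h, h']

lemma stabGen_sq (v : V) : stabGen G v * stabGen G v = 1 := by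
  rw [stabGen_eq, MB_mul, xo_self, xo_self, sgn_ev]
  simp only [nb, SimpleGraph.mem_neighborFinset, SimpleGraph.irrefl, decide_false]
  rw [if_neg (by simp), one_smul, MB_one]

lemma prodG_empty : prodG G ∅ = 1 := by
  rw [prodG]; simp

lemma prodG_insert (a : V) (A : Finset V) (ha : a ∉ A) :
    prodG G (insert a A) = stabGen G a * prodG G A := by
  rw [prodG, prodG, ← List.prod_cons, ← List.map_cons]
  refine List.Perm.prod_eq' (List.Perm.map _ (Finset.toList_insert ha)) ?_
  apply List.Pairwise.map (R := fun a b : V => True)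
  · intro u v _
    exact stabGen_comm G u v
  · have htriv : ∀ l : List V, l.Pairwise (fun _ _ => (True : Prop)) := by
      intro l
      induction l with
      | nil => exact List.Pairwise.nil
      | cons a t ih => exact ih.cons (fun _ _ => trivial)
    exact htriv _

lemma stabGen_commute_prodG (a : V) (A : Finset V) :
    Commute (stabGen G a) (prodG G A) := by
  rw [prodG]
  apply Commute.list_prod_right
  intro y hy
  rcases List.mem_map.1 hy with ⟨u, _, rfl⟩
  exact stabGen_comm G a u

lemma prodG_mul_single (b : V) (A : Finset V) :
    stabGen G b * prodG G A = prodG G (A ∆ {b}) := by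
  by_cases hb : b ∈ A
  · have h1 : A = insert b (A.erase b) := by
      rw [Finset.insert_erase hb]
    have h2 : A ∆ {b} = A.erase b := by
      ext w
      simp only [Finset.mem_symmDiff, Finset.mem_singleton, Finset.mem_erase]
      constructor
      · rintro (⟨hw, hw2⟩ | ⟨rfl, hw2⟩)
        · exact ⟨hw2, hw⟩
        · exact absurd hb hw2
      · rintro ⟨hw1, hw2⟩; exact Or.inl ⟨hw2, hw1⟩
    rw [h2]
    conv_lhs => rw [h1, prodG_insert G b _ (Finset.notMem_erase _ _), ← mul_assoc,
      stabGen_sq, one_mul]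
  · have h2 : A ∆ {b} = insert b A := by
      ext w
      simp only [Finset.mem_symmDiff, Finset.mem_singleton, Finset.mem_insert]
      constructor
      · rintro (⟨hw, _⟩ | ⟨rfl, _⟩)
        · exact Or.inr hw
        · exact Or.inl rfl
      · rintro (rfl | hw)
        · exact Or.inr ⟨rfl, hb⟩
        · exact Or.inl ⟨hw, fun e => hb (e ▸ hw)⟩
    rw [h2, prodG_insert G b A hb]

lemma prodG_mul (A B : Finset V) : prodG G A * prodG G B = prodG G (A ∆ B) := by
  induction B using Finset.induction_on with
  | empty =>
      rw [prodG_empty, mul_one]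
      congr 1
      ext w; simp [Finset.mem_symmDiff]
  | @insert b B hb ih =>
      rw [prodG_insert G b B hb, ← mul_assoc,
        ((stabGen_commute_prodG G b A).symm).eq, mul_assoc, ih,
        prodG_mul_single]
      congr 1
      have : insert b B = B ∆ {b} := by
        ext w
        simp only [Finset.mem_symmDiff, Finset.mem_singleton, Finset.mem_insert]
        constructor
        · rintro (rfl | hw)
          · exact Or.inr ⟨rfl, hb⟩
          · exact Or.inl ⟨hw, fun e => hb (e ▸ hw)⟩
        · rintro (⟨hw, _⟩ | ⟨rfl, _⟩)
          · exact Or.inr hw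
          · exact Or.inl rfl
      rw [this, ← symmDiff_assoc]

/-- structural form of a stabilizer product: X-part is the indicator of `A` -/
lemma prodG_struct (A : Finset V) :
    ∃ c : (V → Bool) → ℂ, prodG G A = M' (fun u => decide (u ∈ A)) c := by
  induction A using Finset.induction_on with
  | empty =>
      refine ⟨fun _ => 1, ?_⟩
      rw [prodG_empty]
      have : (fun u : V => decide (u ∈ (∅ : Finset V))) = (fun _ => false) := by
        funext u; simp
      rw [this, M'_one]
  | @insert a A ha ih =>
      rcases ih with ⟨c, hc⟩
      rw [prodG_insert G a A ha, hc, stabGen_eq, MB, M'_mul]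
      refine ⟨fun x => sgn (nb G a) x * c (xo (ev a) x), ?_⟩
      congr 1
      funext u
      by_cases hu : u = a
      · subst hu; simp [xo, ev, ha]
      · simp [xo, ev, hu]

/-- trace of `M'` with nontrivial X-part vanishes -/
lemma trace_M' (a : V → Bool) (c : (V → Bool) → ℂ) (v₀ : V) (hv : a v₀ = true) :
    LinearMap.trace ℂ (QState V) (M' a c) = 0 := by
  classical
  rw [LinearMap.trace_eq_matrix_trace ℂ (PiLp.basisFun 2 ℂ (V → Bool)) (M' a c),
    Matrix.trace]
  apply Finset.sum_eq_zero
  intro x _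
  rw [Matrix.diag_apply, LinearMap.toMatrix_apply]
  have hx : xo a x ≠ x := by
    intro h
    have := congrFun h v₀
    rw [xo, hv] at this
    simp at this
  simp only [PiLp.basisFun_apply, PiLp.basisFun_repr]
  rw [M'_apply]
  simp [Pi.single_apply, hx]

lemma trace_prodG (A : Finset V) (hA : A.Nonempty) :
    LinearMap.trace ℂ (QState V) (prodG G A) = 0 := by
  rcases prodG_struct G A with ⟨c, hc⟩
  rcases hA with ⟨v₀, hv₀⟩
  rw [hc]
  exact trace_M' _ c v₀ (by simp [hv₀])

lemma sqrt2_sq : ((Real.sqrt 2 : ℝ) : ℂ) * ((Real.sqrt 2 : ℝ) : ℂ) = 2 := by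
  norm_cast
  rw [Real.mul_self_sqrt (by norm_num : (0:ℝ) ≤ 2)]

lemma sqrt2_ne : ((Real.sqrt 2 : ℝ) : ℂ) ≠ 0 := by
  simp only [ne_eq, Complex.ofReal_eq_zero]
  positivity

lemma inv_sqrt2_two : ((Real.sqrt 2 : ℝ) : ℂ)⁻¹ * 2 = ((Real.sqrt 2 : ℝ) : ℂ) := by
  field_simp
  rw [sq, sqrt2_sq]

lemma factor_one (AC : Finset V) (i : V) (hi : i ∈ AC) :
    idealA AC i + (1:ℤ) • idealB AC i = ((Real.sqrt 2 : ℝ) : ℂ) • pauliX i := by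
  rw [one_zsmul, idealA, idealB, if_pos hi, if_pos hi, ← smul_add]
  have h : (pauliX i + pauliZ i) + (pauliX i - pauliZ i) = (2:ℂ) • pauliX i := by
    rw [two_smul]; abel
  rw [h, smul_smul, inv_sqrt2_two]

lemma factor_negone (AC : Finset V) (i : V) (hi : i ∈ AC) :
    idealA AC i + (-1:ℤ) • idealB AC i = ((Real.sqrt 2 : ℝ) : ℂ) • pauliZ i := by
  rw [neg_zsmul, one_zsmul, idealA, idealB, if_pos hi, if_pos hi, ← smul_neg, ← smul_add]
  have h : (pauliX i + pauliZ i) + -(pauliX i - pauliZ i) = (2:ℂ) • pauliZ i := by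
    rw [two_smul]; abel
  rw [h, smul_smul, inv_sqrt2_two]

lemma list_prod_smul (l : List V) (k : ℂ) (F : V → QState V →ₗ[ℂ] QState V) :
    (l.map (fun i => k • F i)).prod = k ^ l.length • (l.map F).prod := by
  induction l with
  | nil => simp
  | cons a t ih =>
      simp only [List.map_cons, List.prod_cons, List.length_cons, ih]
      rw [smul_mul_smul_comm, pow_succ, mul_comm]

/-- normal form of the ideal Bell term -/
lemma bellTerm_eq (AC : Finset V) (s : V → ℤ) (hs : ∀ i, s i = 1 ∨ s i = -1 ∨ s i = 0) :
    bellTermV (idealA AC) (idealB AC) AC s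
      = (((Real.sqrt 2 : ℝ) : ℂ)
            ^ (Finset.univ.filter fun i : V => i ∈ AC ∧ s i ≠ 0).card)
          • MB (fun u => decide (s u = 1)) (fun u => decide (s u = -1)) := by
  classical
  set f : V → V → Bool := fun i => if s i = 1 then ev i else (fun _ => false) with hf
  set g : V → V → Bool := fun i => if s i = -1 then ev i else (fun _ => false) with hg
  set l1 := (Finset.univ.filter fun i : V => i ∈ AC ∧ s i ≠ 0).toList with hl1
  set l2 := (Finset.univ.filter fun i : V => i ∉ AC).toList with hl2
  have hmem1 : ∀ i ∈ l1, i ∈ AC ∧ s i ≠ 0 := by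
    intro i hi
    have := Finset.mem_toList.1 hi
    simpa using this
  have hmem2 : ∀ i ∈ l2, i ∉ AC := by
    intro i hi
    have := Finset.mem_toList.1 hi
    simpa using this
  -- first list
  have step1 : l1.map (fun i => idealA AC i + s i • idealB AC i)
      = l1.map (fun i => ((Real.sqrt 2 : ℝ) : ℂ) • MB (f i) (g i)) := by
    apply List.map_congr_left
    intro i hi
    rcases hmem1 i hi with ⟨hiAC, hi0⟩
    rcases hs i with h1 | h1 | h1
    · rw [h1, factor_one AC i hiAC, hf, hg]
      simp only [h1]
      norm_num
      rw [pauliXdef]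
    · rw [h1, factor_negone AC i hiAC, hf, hg]
      simp only [h1]
      norm_num
      rw [pauliZdef]
    · exact absurd h1 hi0
  -- second list
  have step2 : l2.map (fun i => obsV (idealA AC) (idealB AC) i (s i))
      = l2.map (fun i => MB (f i) (g i)) := by
    apply List.map_congr_left
    intro i hi
    have hiAC := hmem2 i hi
    rcases hs i with h1 | h1 | h1
    · rw [obsV, if_pos h1, idealA, if_neg hiAC, hf, hg]
      simp only [h1]
      norm_num
      rw [pauliXdef]
    · rw [obsV, if_neg (by rw [h1]; decide), if_pos h1, idealB, if_neg hiAC, hf, hg]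
      simp only [h1]
      norm_num
      rw [pauliZdef]
    · rw [obsV, if_neg (by rw [h1]; decide), if_neg (by rw [h1]; decide), hf, hg]
      simp only [h1]
      norm_num
      rw [MB_one]
  rw [bellTermV, ← hl1, ← hl2, step1, step2, list_prod_smul]
  rw [smul_mul_assoc, ← List.prod_append, ← List.map_append]
  have hnd : (l1 ++ l2).Nodup := by
    apply List.Nodup.append (Finset.nodup_toList _) (Finset.nodup_toList _)
    intro x hx1 hx2
    exact (hmem2 x hx2) (hmem1 x hx1).1
  have hflocal : ∀ v ∈ l1 ++ l2, ∀ u, u ≠ v → f v u = false := by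
    intro v _ u hu
    rw [hf]
    by_cases h : s v = 1 <;> simp [h, ev, hu]
  have hglocal : ∀ v ∈ l1 ++ l2, ∀ u ∈ l1 ++ l2, u ≠ v → g v u = false := by
    intro v _ u _ hu
    rw [hg]
    by_cases h : s v = -1 <;> simp [h, ev, hu]
  rw [prod_MB (l1 ++ l2) hnd f g hflocal hglocal]
  have hmm : ∀ u : V, (u ∈ l1 ++ l2) ↔ ((u ∈ AC ∧ s u ≠ 0) ∨ u ∉ AC) := by
    intro u
    simp [hl1, hl2, List.mem_append, Finset.mem_toList]
  have hXpart : (fun u => ((l1 ++ l2).map (fun v => f v u)).foldr xor false)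
      = fun u => decide (s u = 1) := by
    funext u
    rw [foldr_xor_local _ hnd _ u (fun w _ hw => by
      by_cases h : s w = 1
      · have h2 := Ne.symm hw
        simp [hf, h, ev, h2]
      · simp [hf, h])]
    by_cases hu : u ∈ l1 ++ l2
    · have hfu : f u u = decide (s u = 1) := by
        by_cases h : s u = 1 <;> simp [hf, h, ev]
      simp [hu, hfu]
    · have : u ∈ AC ∧ s u = 0 := by
        rcases not_or.1 ((hmm u).not.1 hu) with ⟨h1, h2⟩
        exact ⟨not_not.1 h2, by
          by_contra h0
          exact h1 ⟨not_not.1 h2, h0⟩⟩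
      simp [hu, this.2]
  have hZpart : (fun u => ((l1 ++ l2).map (fun v => g v u)).foldr xor false)
      = fun u => decide (s u = -1) := by
    funext u
    rw [foldr_xor_local _ hnd _ u (fun w _ hw => by
      by_cases h : s w = -1
      · have h2 := Ne.symm hw
        simp [hg, h, ev, h2]
      · simp [hg, h])]
    by_cases hu : u ∈ l1 ++ l2
    · have hgu : g u u = decide (s u = -1) := by
        by_cases h : s u = -1 <;> simp [hg, h, ev]
      simp [hu, hgu]
    · have : u ∈ AC ∧ s u = 0 := by
        rcases not_or.1 ((hmm u).not.1 hu) with ⟨h1, h2⟩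
        exact ⟨not_not.1 h2, by
          by_contra h0
          exact h1 ⟨not_not.1 h2, h0⟩⟩
      simp [hu, this.2]
  rw [hXpart, hZpart, hl1, Finset.length_toList]

lemma countP_toList (A : Finset V) (p : V → Bool) :
    A.toList.countP p = (A.filter (fun v => p v = true)).card := by
  classical
  rw [Finset.card_filter]
  induction A using Finset.induction_on with
  | empty => simp
  | @insert a B ha ih =>
      rw [Finset.sum_insert ha, ← ih]
      have : (insert a B).toList.Perm (a :: B.toList) := Finset.toList_insert ha
      rw [this.countP_eq]
      rw [List.countP_cons]
      cases h : p a <;> simp [h, Nat.add_comm]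

/-- normal form of a stabilizer product over an independent set -/
lemma prodG_indep (A : Finset V) (hA : ∀ u ∈ A, ∀ w ∈ A, ¬ G.Adj u w) :
    prodG G A = MB (fun u => decide (u ∈ A))
      (fun u => decide (Odd ((G.neighborFinset u ∩ A).card))) := by
  rw [prodG, List.map_congr_left (fun w _ => stabGen_eq G w),
    prod_MB A.toList (Finset.nodup_toList A) ev (nb G)
      (fun v _ u hu => by simp [ev, hu])
      (fun v hv u hu _ => by
        simp only [nb, SimpleGraph.mem_neighborFinset, decide_eq_false_iff_not]
        exact fun h => hA v (Finset.mem_toList.1 hv) u (Finset.mem_toList.1 hu) h)]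
  congr 1
  · funext u
    rw [foldr_xor_local _ (Finset.nodup_toList A) _ u
      (fun w _ hw => by simp only [ev, decide_eq_false_iff_not]; exact Ne.symm hw)]
    simp [ev, Finset.mem_toList]
  · funext u
    rw [foldr_xor_parity, countP_toList]
    congr 2
    rw [Finset.inter_comm]
    congr 1
    ext w
    simp only [Finset.mem_filter, Finset.mem_inter, nb, SimpleGraph.mem_neighborFinset,
      decide_eq_true_eq]
    constructor
    · rintro ⟨hw, ha⟩; exact ⟨hw, ha.symm⟩
    · rintro ⟨hw, ha⟩; exact ⟨hw, ha.symm⟩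

lemma signSeq_vals (A : Finset V) (u : V) :
    signSeq G A u = 1 ∨ signSeq G A u = -1 ∨ signSeq G A u = 0 := by
  rw [signSeq]
  split_ifs <;> simp

/-- the Bell term of a stabilizer sign sequence is `√2^k` times the stabilizer -/
lemma bellTerm_signSeq (AC : Finset V) (A : Finset V)
    (hA : ∀ u ∈ A, ∀ w ∈ A, ¬ G.Adj u w) :
    bellTermV (idealA AC) (idealB AC) AC (signSeq G A)
      = (((Real.sqrt 2 : ℝ) : ℂ)
            ^ (Finset.univ.filter fun i : V => i ∈ AC ∧ signSeq G A i ≠ 0).card)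
          • prodG G A := by
  rw [bellTerm_eq AC _ (signSeq_vals G A), prodG_indep G A hA]
  congr 2
  · funext u
    rw [signSeq]
    by_cases hu : u ∈ A
    · simp [hu]
    · simp only [if_neg hu]
      split_ifs with h
      · simp [hu]
      · simp [hu]
  · funext u
    rw [signSeq]
    by_cases hu : u ∈ A
    · have : G.neighborFinset u ∩ A = ∅ := by
        ext w
        simp only [Finset.mem_inter, SimpleGraph.mem_neighborFinset, Finset.notMem_empty,
          iff_false, not_and]
        exact fun h hw => hA u hu w hw h
      simp [hu, this]
    · simp only [if_neg hu]
      split_ifs with h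
      · simp [h]
      · simp [h]

lemma prodG_comm (A B : Finset V) : Commute (prodG G A) (prodG G B) := by
  unfold Commute SemiconjBy
  rw [prodG_mul, prodG_mul, symmDiff_comm]

lemma factor_commute (A B : Finset V) :
    Commute ((2:ℂ)⁻¹ • (1 + prodG G B)) (prodG G A) := by
  exact (((Commute.one_left _).add_left (prodG_comm G B A))).smul_left _

lemma factor_absorb (A : Finset V) :
    ((2:ℂ)⁻¹ • (1 + prodG G A)) * prodG G A = (2:ℂ)⁻¹ • (1 + prodG G A) := by
  rw [smul_mul_assoc, add_mul, one_mul, prodG_mul, symmDiff_self]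
  have : prodG G (⊥ : Finset V) = 1 := prodG_empty G
  rw [this, add_comm]

lemma prod_absorb {n : ℕ} (Afam : Fin n → Finset V) (l : List (Fin n)) (j : Fin n)
    (hj : j ∈ l) :
    (l.map (fun i => (2:ℂ)⁻¹ • (1 + prodG G (Afam i)))).prod * prodG G (Afam j)
      = (l.map (fun i => (2:ℂ)⁻¹ • (1 + prodG G (Afam i)))).prod := by
  induction l with
  | nil => simp at hj
  | cons i t ih =>
      simp only [List.map_cons, List.prod_cons]
      by_cases hjt : j ∈ t
      · rw [mul_assoc, ih hjt]
      · have hij : i = j := by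
          rcases List.mem_cons.1 hj with h | h
          · exact h.symm
          · exact absurd h hjt
        subst hij
        have hcomm : Commute (prodG G (Afam i))
            ((t.map (fun i => (2:ℂ)⁻¹ • (1 + prodG G (Afam i)))).prod) := by
          apply Commute.list_prod_right
          intro y hy
          rcases List.mem_map.1 hy with ⟨u, _, rfl⟩
          exact (factor_commute G (Afam i) (Afam u)).symm
        rw [mul_assoc, hcomm.symm.eq, ← mul_assoc, factor_absorb]

lemma indicator_inj (A B : Finset V)
    (h : ∀ v, (if v ∈ A then (1 : ZMod 2) else 0) = if v ∈ B then 1 else 0) :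
    A = B := by
  ext v
  have := h v
  by_cases hA : v ∈ A <;> by_cases hB : v ∈ B <;> simp [hA, hB] at this ⊢

lemma indicator_symmDiff (A B : Finset V) (v : V) :
    (if v ∈ A ∆ B then (1 : ZMod 2) else 0)
      = (if v ∈ A then (1 : ZMod 2) else 0) + (if v ∈ B then (1 : ZMod 2) else 0) := by
  by_cases hA : v ∈ A <;> by_cases hB : v ∈ B <;>
    simp [Finset.mem_symmDiff, hA, hB] <;> decide

lemma prod_absorb_span {n : ℕ} (Afam : Fin n → Finset V) (l : List (Fin n))
    (hall : ∀ j : Fin n, j ∈ l) (A : Finset V) (hA : memSpan Afam A) :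
    (l.map (fun i => (2:ℂ)⁻¹ • (1 + prodG G (Afam i)))).prod * prodG G A
      = (l.map (fun i => (2:ℂ)⁻¹ • (1 + prodG G (Afam i)))).prod := by
  rcases hA with ⟨S, hS⟩
  suffices h : ∀ S : Finset (Fin n), ∃ A' : Finset V,
      (∀ v : V, (if v ∈ A' then (1 : ZMod 2) else 0)
        = ∑ j ∈ S, (if v ∈ Afam j then (1 : ZMod 2) else 0)) ∧
      (l.map (fun i => (2:ℂ)⁻¹ • (1 + prodG G (Afam i)))).prod * prodG G A'
        = (l.map (fun i => (2:ℂ)⁻¹ • (1 + prodG G (Afam i)))).prod by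
    rcases h S with ⟨A', hA', habs⟩
    have : A = A' := indicator_inj A A' (fun v => by rw [hS v, hA' v])
    rw [this]
    exact habs
  intro T
  induction T using Finset.induction_on with
  | empty =>
      refine ⟨∅, fun v => by simp, ?_⟩
      rw [prodG_empty, mul_one]
  | @insert j T hj ih =>
      rcases ih with ⟨A', hA', habs⟩
      refine ⟨A' ∆ Afam j, fun v => ?_, ?_⟩
      · rw [indicator_symmDiff, hA' v, Finset.sum_insert hj, add_comm]
      · rw [← prodG_mul, ← mul_assoc, habs, prod_absorb G Afam l j (hall j)]

lemma trace_rec {n : ℕ} (Afam : Fin n → Finset V) (l : List (Fin n)) (C : Finset V) :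
    ∃ r : ℝ, 0 ≤ r ∧
      LinearMap.trace ℂ (QState V)
        (prodG G C * (l.map (fun i => (2:ℂ)⁻¹ • (1 + prodG G (Afam i)))).prod) = (r : ℂ) ∧
      (C = ∅ → 0 < r) := by
  induction l generalizing C with
  | nil =>
      by_cases hC : C = ∅
      · subst hC
        refine ⟨(Module.finrank ℂ (QState V) : ℝ), by positivity, ?_, fun _ => ?_⟩
        · rw [List.map_nil, List.prod_nil, mul_one, prodG_empty, LinearMap.trace_one]
          push_cast
          ring
        · have : 0 < Module.finrank ℂ (QState V) := Module.finrank_pos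
          exact_mod_cast this
      · refine ⟨0, le_refl 0, ?_, fun h => absurd h hC⟩
        rw [List.map_nil, List.prod_nil, mul_one,
          trace_prodG G C (Finset.nonempty_iff_ne_empty.2 hC)]
        norm_num
  | cons j t ih =>
      rcases ih C with ⟨r1, hr1, ht1, hp1⟩
      rcases ih (C ∆ Afam j) with ⟨r2, hr2, ht2, _⟩
      refine ⟨2⁻¹ * (r1 + r2), by positivity, ?_, fun hc => ?_⟩
      · have expand : prodG G C *
            ((j :: t).map (fun i => (2:ℂ)⁻¹ • (1 + prodG G (Afam i)))).prod
            = (2:ℂ)⁻¹ • (prodG G C * (t.map (fun i => (2:ℂ)⁻¹ • (1 + prodG G (Afam i)))).prod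
                + prodG G (C ∆ Afam j)
                  * (t.map (fun i => (2:ℂ)⁻¹ • (1 + prodG G (Afam i)))).prod) := by
          simp only [List.map_cons, List.prod_cons]
          rw [smul_mul_assoc, mul_smul_comm, add_mul, one_mul, mul_add, smul_add,
            ← mul_assoc, prodG_mul, smul_add]
        rw [expand, map_smul, map_add, ht1, ht2, smul_eq_mul]
        push_cast
        ring
      · subst hc
        have : (∅ : Finset V) ∆ Afam j = Afam j := by
          ext w; simp [Finset.mem_symmDiff]
        have h1 := hp1 rfl
        nlinarith [hr2]

lemma list_sum_const {α : Type*} (l : List α) (f : α → ℂ) (c : ℂ)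
    (h : ∀ x ∈ l, f x = c) : (l.map f).sum = l.length * c := by
  induction l with
  | nil => simp
  | cons a t ih =>
      rw [List.map_cons, List.sum_cons, h a (by simp),
        ih (fun x hx => h x (List.mem_cons_of_mem _ hx))]
      simp [List.length_cons]
      push_cast
      ring


end AuxStatement14

theorem mixed_state_attains_quantum_bound
    (G : SimpleGraph V) [DecidableRel G.Adj]
    (Afam : Fin (Fintype.card V - 1) → Finset V)
    (AC : Finset V)
    (P : List ((V → ℤ) × (V → ℤ))) (R : List (V → ℤ))
    -- every occurring sign sequence comes from an independent set in the span
    (hstabP : ∀ p ∈ P,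
      (∃ A : Finset V, (∀ u ∈ A, ∀ w ∈ A, ¬ G.Adj u w) ∧ memSpan Afam A ∧
        p.1 = signSeq G A) ∧
      (∃ A : Finset V, (∀ u ∈ A, ∀ w ∈ A, ¬ G.Adj u w) ∧ memSpan Afam A ∧
        p.2 = signSeq G A))
    (hstabR : ∀ u ∈ R,
      ∃ A : Finset V, (∀ x ∈ A, ∀ y ∈ A, ¬ G.Adj x y) ∧ memSpan Afam A ∧
        u = signSeq G A)
    -- Requirement 1
    (hreq1 : ∀ p ∈ P, ∃ T ∈ AC, p.1 T * p.2 T = -1 ∧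
      ∀ i ∈ AC, i ≠ T → p.1 i = 0 ∧ p.2 i = 0)
    -- Requirement 2
    (hreq2 : ∀ u ∈ R, ∀ i ∈ AC, u i = 0)
    -- the stabilizers S^j, the projector Q and the mixed state ρ
    (Sop : Fin (Fintype.card V - 1) → (QState V →ₗ[ℂ] QState V))
    (hSop : ∀ j, Sop j = ((Afam j).toList.map (stabGen G)).prod)
    (Q : QState V →ₗ[ℂ] QState V)
    (hQ : Q = ((List.finRange (Fintype.card V - 1)).map
        (fun j => (2 : ℂ)⁻¹ • (1 + Sop j))).prod)
    (ρ : QState V →ₗ[ℂ] QState V)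
    (hρ : ρ = (LinearMap.trace ℂ (QState V) Q)⁻¹ • Q) :
    LinearMap.trace ℂ (QState V)
        (ρ * ((P.map (fun p => bellTermV (idealA AC) (idealB AC) AC p.1
                              + bellTermV (idealA AC) (idealB AC) AC p.2)).sum
              + (R.map (fun u => bellTermV (idealA AC) (idealB AC) AC u)).sum))
      = ((2 * Real.sqrt 2 * P.length + R.length : ℝ) : ℂ) := by
  classical
  -- rewrite Q in prodG form
  have hQ' : Q = ((List.finRange (Fintype.card V - 1)).map
      (fun j => (2:ℂ)⁻¹ • (1 + prodG G (Afam j)))).prod := by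
    rw [hQ]
    congr 1
    apply List.map_congr_left
    intro j _
    rw [hSop j, prodG]
  -- the trace of Q is a positive real
  obtain ⟨r, hr0, htr, hpos⟩ := trace_rec G Afam (List.finRange (Fintype.card V - 1)) ∅
  rw [prodG_empty, one_mul, ← hQ'] at htr
  have hrpos : 0 < r := hpos rfl
  have hrne : (r : ℂ) ≠ 0 := by
    simp only [ne_eq, Complex.ofReal_eq_zero]
    exact ne_of_gt hrpos
  -- absorption of a stabilizer product into Q
  have habs : ∀ A : Finset V, memSpan Afam A → Q * prodG G A = Q := by
    intro A hA
    rw [hQ']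
    exact prod_absorb_span G Afam (List.finRange (Fintype.card V - 1)) (fun j => List.mem_finRange j) A hA
  -- trace of Q times a bell term coming from an independent set in the span
  have key : ∀ (s : V → ℤ) (A : Finset V), (∀ u ∈ A, ∀ w ∈ A, ¬ G.Adj u w) →
      memSpan Afam A → s = signSeq G A →
      LinearMap.trace ℂ (QState V) (Q * bellTermV (idealA AC) (idealB AC) AC s)
        = (((Real.sqrt 2 : ℝ) : ℂ)
            ^ (Finset.univ.filter fun i : V => i ∈ AC ∧ s i ≠ 0).card) * (r : ℂ) := by
    intro s A hind hsp hss
    subst hss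
    rw [bellTerm_signSeq G AC A hind, mul_smul_comm, habs A hsp, map_smul, htr,
      smul_eq_mul]
  -- trace against ρ as linear functional
  have hmain : ∀ X : QState V →ₗ[ℂ] QState V,
      LinearMap.trace ℂ (QState V) (ρ * X)
        = (r : ℂ)⁻¹ * LinearMap.trace ℂ (QState V) (Q * X) := by
    intro X
    rw [hρ, htr, smul_mul_assoc, map_smul, smul_eq_mul]
  -- per-pair value
  have hP : ∀ p ∈ P,
      LinearMap.trace ℂ (QState V)
        (ρ * (bellTermV (idealA AC) (idealB AC) AC p.1
              + bellTermV (idealA AC) (idealB AC) AC p.2))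
      = 2 * ((Real.sqrt 2 : ℝ) : ℂ) := by
    intro p hp
    obtain ⟨⟨A1, hind1, hsp1, hps1⟩, ⟨A2, hind2, hsp2, hps2⟩⟩ := hstabP p hp
    obtain ⟨T, hT, hprod, hzero⟩ := hreq1 p hp
    have hcard1 : (Finset.univ.filter fun i : V => i ∈ AC ∧ p.1 i ≠ 0) = {T} := by
      ext i
      simp only [Finset.mem_filter, Finset.mem_univ, true_and, Finset.mem_singleton]
      constructor
      · rintro ⟨hiAC, hi0⟩
        by_contra hiT
        exact hi0 (hzero i hiAC hiT).1
      · rintro rfl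
        refine ⟨hT, fun h0 => ?_⟩
        rw [h0] at hprod
        simp at hprod
    have hcard2 : (Finset.univ.filter fun i : V => i ∈ AC ∧ p.2 i ≠ 0) = {T} := by
      ext i
      simp only [Finset.mem_filter, Finset.mem_univ, true_and, Finset.mem_singleton]
      constructor
      · rintro ⟨hiAC, hi0⟩
        by_contra hiT
        exact hi0 (hzero i hiAC hiT).2
      · rintro rfl
        refine ⟨hT, fun h0 => ?_⟩
        rw [h0] at hprod
        simp at hprod
    rw [hmain, mul_add, map_add, key p.1 A1 hind1 hsp1 hps1, key p.2 A2 hind2 hsp2 hps2,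
      hcard1, hcard2, Finset.card_singleton, pow_one]
    field_simp
    ring
  -- per-R value
  have hR : ∀ u ∈ R,
      LinearMap.trace ℂ (QState V)
        (ρ * bellTermV (idealA AC) (idealB AC) AC u) = 1 := by
    intro u hu
    obtain ⟨A, hind, hsp, hus⟩ := hstabR u hu
    have hcard : (Finset.univ.filter fun i : V => i ∈ AC ∧ u i ≠ 0) = ∅ := by
      ext i
      simp only [Finset.mem_filter, Finset.mem_univ, true_and, Finset.notMem_empty,
        iff_false, not_and]
      intro hiAC
      simp [hreq2 u hu i hiAC]
    rw [hmain, key u A hind hsp hus, hcard, Finset.card_empty, pow_zero, one_mul]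
    exact inv_mul_cancel₀ hrne
  -- assemble
  set τ : (QState V →ₗ[ℂ] QState V) →ₗ[ℂ] ℂ :=
    (LinearMap.trace ℂ (QState V)).comp (LinearMap.mulLeft ℂ ρ) with hτ
  have hτap : ∀ X, τ X = LinearMap.trace ℂ (QState V) (ρ * X) := fun X => rfl
  have : LinearMap.trace ℂ (QState V)
      (ρ * ((P.map (fun p => bellTermV (idealA AC) (idealB AC) AC p.1
                              + bellTermV (idealA AC) (idealB AC) AC p.2)).sum
              + (R.map (fun u => bellTermV (idealA AC) (idealB AC) AC u)).sum))
      = ((P.map (fun p => bellTermV (idealA AC) (idealB AC) AC p.1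
                              + bellTermV (idealA AC) (idealB AC) AC p.2)).map τ).sum
        + ((R.map (fun u => bellTermV (idealA AC) (idealB AC) AC u)).map τ).sum := by
    rw [← hτap, map_add, map_list_sum, map_list_sum]
  rw [this, List.map_map, List.map_map]
  rw [list_sum_const _ _ (2 * ((Real.sqrt 2 : ℝ) : ℂ))
      (fun p hp => by rw [Function.comp_apply, hτap]; exact hP p hp),
    list_sum_const _ _ 1 (fun u hu => by rw [Function.comp_apply, hτap]; exact hR u hu)]
  push_cast
  ring
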